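/- Let x^eq ∈ E := {x ∈ X : x₂ = 0 and x₃ = 0} and let N(x^eq) be a neighborhood of x^eq such that: (A2) there exists ρ > 0 with V_∞(x) ≤ ρ ℓ*(x) for all x ∈ N(x^eq) ∩ X, and M := inf{ℓ*(x) : x ∈ X \ N(x^eq)} > 0; and (A3) for the prediction horizon T > 0 and constant C′ > 0 there exists C̄ > 0 with δ ℓ*(x) ≤ C̄ V_δ(x) for all δ ∈ (0, T] and all x with V_T(x) ≤ C′. Then for every δ ∈ (0, κ) with κ := max{C′/M, ρ}, there exists an integer N ≥ 1 and α ∈ [0,1) such that, with T = Nδ, for every x̌ with V_T(x̌) ≤ C′ and every control u* minimizing J_T(x̌, ·) over controls keeping the trajectory in X on [0, T]: V_T(x(δ; x̌, u*)) ≤ V_T(x̌) − (1 − α) ∫₀^δ ℓ(x(s; x̌, u*), u*(s)) ds. -/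

import Mathlib

open MeasureTheory Set Filter Topology
open scoped ENNReal

noncomputable section

/-- A valid control: Lebesgue-measurable with values in
`U = [βmin, βnom] × [γnom, γmax]` for all `t ≥ 0`. -/
def IsCtrl (βmin βnom γnom γmax : ℝ) (u₁ u₂ : ℝ → ℝ) : Prop :=
  Measurable u₁ ∧ Measurable u₂ ∧
    ∀ t : ℝ, 0 ≤ t → u₁ t ∈ Icc βmin βnom ∧ u₂ t ∈ Icc γnom γmax

/-- The SEIR trajectory: a (locally absolutely continuous) solution of the SEIR
system, written in integral form. -/
def IsTraj (η : ℝ) (u₁ u₂ x₁ x₂ x₃ : ℝ → ℝ) : Prop :=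
  ContinuousOn x₁ (Ici 0) ∧ ContinuousOn x₂ (Ici 0) ∧ ContinuousOn x₃ (Ici 0) ∧
    (∀ t : ℝ, 0 ≤ t → x₁ t = x₁ 0 + ∫ s in (0:ℝ)..t, -(u₁ s * x₁ s * x₃ s)) ∧
    (∀ t : ℝ, 0 ≤ t → x₂ t = x₂ 0 + ∫ s in (0:ℝ)..t, (u₁ s * x₁ s * x₃ s - η * x₂ s)) ∧
    (∀ t : ℝ, 0 ≤ t → x₃ t = x₃ 0 + ∫ s in (0:ℝ)..t, (η * x₂ s - u₂ s * x₃ s))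

/-- The state constraint set `X = {x ∈ [0,1]³ : x₃ ≤ Imax ∧ x₁ + x₂ + x₃ ≤ 1}`. -/
def InX (Imax a b c : ℝ) : Prop :=
  a ∈ Icc (0:ℝ) 1 ∧ b ∈ Icc (0:ℝ) 1 ∧ c ∈ Icc (0:ℝ) 1 ∧ c ≤ Imax ∧ a + b + c ≤ 1

/-- The invariant box `X_M = {x ∈ X : x₁ ≤ γnom/βnom ∧ x₂ ≤ γnom Imax / η}`. -/
def InXM (η βnom γnom Imax a b c : ℝ) : Prop :=
  InX Imax a b c ∧ a ≤ γnom / βnom ∧ b ≤ γnom * Imax / η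

/-- The admissible set `A`: states in `X` from which some control keeps the
trajectory in `X` for all `t ≥ 0`. -/
def InA (η βmin βnom γnom γmax Imax a b c : ℝ) : Prop :=
  InX Imax a b c ∧
    ∃ u₁ u₂ x₁ x₂ x₃ : ℝ → ℝ,
      IsCtrl βmin βnom γnom γmax u₁ u₂ ∧ IsTraj η u₁ u₂ x₁ x₂ x₃ ∧
        x₁ 0 = a ∧ x₂ 0 = b ∧ x₃ 0 = c ∧
        ∀ t : ℝ, 0 ≤ t → InX Imax (x₁ t) (x₂ t) (x₃ t)

/-- The set `A' = A \ {x ∈ A : x₁ ≥ γnom/βnom ∧ x₃(x₂+x₃) < ε}`. -/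
def InA' (η βmin βnom γnom γmax Imax ε a b c : ℝ) : Prop :=
  InA η βmin βnom γnom γmax Imax a b c ∧ ¬(γnom / βnom ≤ a ∧ c * (b + c) < ε)

/-- The quadratic stage cost `ℓ(x,u)`. -/
def stageCost (lam βnom γnom b c v₁ v₂ : ℝ) : ℝ :=
  lam * (b ^ 2 + c ^ 2) + (1 - lam) * ((v₁ - βnom) ^ 2 + (v₂ - γnom) ^ 2)

/-- The finite-horizon value function `V_T(x⁰)` (with value `∞` if infeasible). -/
def Vfin (η βmin βnom γnom γmax Imax lam T a b c : ℝ) : ℝ≥0∞ :=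
  sInf { J : ℝ≥0∞ | ∃ u₁ u₂ x₁ x₂ x₃ : ℝ → ℝ,
    IsCtrl βmin βnom γnom γmax u₁ u₂ ∧ IsTraj η u₁ u₂ x₁ x₂ x₃ ∧
      x₁ 0 = a ∧ x₂ 0 = b ∧ x₃ 0 = c ∧
      (∀ t ∈ Icc (0:ℝ) T, InX Imax (x₁ t) (x₂ t) (x₃ t)) ∧
      J = ∫⁻ s in Ioc (0:ℝ) T,
            ENNReal.ofReal (stageCost lam βnom γnom (x₂ s) (x₃ s) (u₁ s) (u₂ s)) }

/-- The infinite-horizon value function `V_∞(x⁰)` (with value `∞` if infeasible). -/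
def Vinf (η βmin βnom γnom γmax Imax lam a b c : ℝ) : ℝ≥0∞ :=
  sInf { J : ℝ≥0∞ | ∃ u₁ u₂ x₁ x₂ x₃ : ℝ → ℝ,
    IsCtrl βmin βnom γnom γmax u₁ u₂ ∧ IsTraj η u₁ u₂ x₁ x₂ x₃ ∧
      x₁ 0 = a ∧ x₂ 0 = b ∧ x₃ 0 = c ∧
      (∀ t : ℝ, 0 ≤ t → InX Imax (x₁ t) (x₂ t) (x₃ t)) ∧
      J = ∫⁻ s in Ioi (0:ℝ),
            ENNReal.ofReal (stageCost lam βnom γnom (x₂ s) (x₃ s) (u₁ s) (u₂ s)) }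

namespace SEIRAux

open intervalIntegral

/-! ### basic integrability -/

lemma intervalIntegrable_of_bounded {f : ℝ → ℝ} {a b C : ℝ} (hab : a ≤ b)
    (hm : AEStronglyMeasurable f (volume.restrict (Ioc a b)))
    (hC : ∀ r ∈ Ioc a b, |f r| ≤ C) : IntervalIntegrable f volume a b := by
  rw [intervalIntegrable_iff_integrableOn_Ioc_of_le hab]
  exact ⟨hm, HasFiniteIntegral.restrict_of_bounded (C := C) measure_Ioc_lt_top
    (ae_restrict_of_forall_mem measurableSet_Ioc (fun x hx => by
      simpa [Real.norm_eq_abs] using hC x hx))⟩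

lemma seir_II {η βmin βnom γnom γmax : ℝ} {u₁ u₂ x₁ x₂ x₃ : ℝ → ℝ}
    (hc : IsCtrl βmin βnom γnom γmax u₁ u₂) (ht : IsTraj η u₁ u₂ x₁ x₂ x₃)
    {a b : ℝ} (ha : 0 ≤ a) (hab : a ≤ b) :
    IntervalIntegrable (fun s => -(u₁ s * x₁ s * x₃ s)) volume a b ∧
    IntervalIntegrable (fun s => u₁ s * x₁ s * x₃ s - η * x₂ s) volume a b ∧
    IntervalIntegrable (fun s => η * x₂ s - u₂ s * x₃ s) volume a b := by
  have hb : (0:ℝ) ≤ b := le_trans ha hab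
  have hsub : Ioc a b ⊆ Ici (0:ℝ) := fun r hr => le_of_lt (lt_of_le_of_lt ha hr.1)
  have hsub' : Ioc a b ⊆ Icc (0:ℝ) b := fun r hr => ⟨le_of_lt (lt_of_le_of_lt ha hr.1), hr.2⟩
  obtain ⟨K₁, hK₁⟩ := isCompact_Icc.exists_bound_of_continuousOn
    (ht.1.mono (Icc_subset_Ici_self : Icc (0:ℝ) b ⊆ Ici 0))
  obtain ⟨K₂, hK₂⟩ := isCompact_Icc.exists_bound_of_continuousOn
    (ht.2.1.mono (Icc_subset_Ici_self : Icc (0:ℝ) b ⊆ Ici 0))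
  obtain ⟨K₃, hK₃⟩ := isCompact_Icc.exists_bound_of_continuousOn
    (ht.2.2.1.mono (Icc_subset_Ici_self : Icc (0:ℝ) b ⊆ Ici 0))
  have hK₁0 : 0 ≤ K₁ := le_trans (norm_nonneg _) (hK₁ 0 ⟨le_refl _, hb⟩)
  have hK₂0 : 0 ≤ K₂ := le_trans (norm_nonneg _) (hK₂ 0 ⟨le_refl _, hb⟩)
  have hK₃0 : 0 ≤ K₃ := le_trans (norm_nonneg _) (hK₃ 0 ⟨le_refl _, hb⟩)
  set Bu : ℝ := max |βmin| |βnom|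
  set Bv : ℝ := max |γnom| |γmax|
  have hu : ∀ r ∈ Ioc a b, |u₁ r| ≤ Bu := fun r hr =>
    abs_le_max_abs_abs ((hc.2.2 r (hsub hr)).1).1 ((hc.2.2 r (hsub hr)).1).2
  have hv : ∀ r ∈ Ioc a b, |u₂ r| ≤ Bv := fun r hr =>
    abs_le_max_abs_abs ((hc.2.2 r (hsub hr)).2).1 ((hc.2.2 r (hsub hr)).2).2
  have hBu0 : 0 ≤ Bu := le_trans (abs_nonneg _) (le_max_left _ _)
  have hBv0 : 0 ≤ Bv := le_trans (abs_nonneg _) (le_max_right _ _)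
  have m1 : AEMeasurable x₁ (volume.restrict (Ioc a b)) :=
    ((ht.1.mono hsub).aemeasurable measurableSet_Ioc)
  have m2 : AEMeasurable x₂ (volume.restrict (Ioc a b)) :=
    ((ht.2.1.mono hsub).aemeasurable measurableSet_Ioc)
  have m3 : AEMeasurable x₃ (volume.restrict (Ioc a b)) :=
    ((ht.2.2.1.mono hsub).aemeasurable measurableSet_Ioc)
  have mu1 : AEMeasurable u₁ (volume.restrict (Ioc a b)) := hc.1.aemeasurable
  have mu2 : AEMeasurable u₂ (volume.restrict (Ioc a b)) := hc.2.1.aemeasurable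
  have bx1 : ∀ r ∈ Ioc a b, |x₁ r| ≤ K₁ := fun r hr => by
    simpa [Real.norm_eq_abs] using hK₁ r (hsub' hr)
  have bx2 : ∀ r ∈ Ioc a b, |x₂ r| ≤ K₂ := fun r hr => by
    simpa [Real.norm_eq_abs] using hK₂ r (hsub' hr)
  have bx3 : ∀ r ∈ Ioc a b, |x₃ r| ≤ K₃ := fun r hr => by
    simpa [Real.norm_eq_abs] using hK₃ r (hsub' hr)
  refine ⟨intervalIntegrable_of_bounded (C := Bu * K₁ * K₃) hab
      (((mu1.mul m1).mul m3).neg.aestronglyMeasurable) (fun r hr => ?_),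
    intervalIntegrable_of_bounded (C := Bu * K₁ * K₃ + |η| * K₂) hab
      (((mu1.mul m1).mul m3).sub (m2.const_mul η)).aestronglyMeasurable (fun r hr => ?_),
    intervalIntegrable_of_bounded (C := |η| * K₂ + Bv * K₃) hab
      ((m2.const_mul η).sub (mu2.mul m3)).aestronglyMeasurable (fun r hr => ?_)⟩
  · have h1 := hu r hr; have h2 := bx1 r hr; have h3 := bx3 r hr
    have : |u₁ r * x₁ r * x₃ r| ≤ Bu * K₁ * K₃ := by
      rw [abs_mul, abs_mul]
      exact mul_le_mul (mul_le_mul h1 h2 (abs_nonneg _) hBu0) h3 (abs_nonneg _)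
        (mul_nonneg hBu0 hK₁0)
    simpa [abs_neg] using this
  · have h1 := hu r hr; have h2 := bx1 r hr; have h3 := bx3 r hr; have h4 := bx2 r hr
    have hA : |u₁ r * x₁ r * x₃ r| ≤ Bu * K₁ * K₃ := by
      rw [abs_mul, abs_mul]
      exact mul_le_mul (mul_le_mul h1 h2 (abs_nonneg _) hBu0) h3 (abs_nonneg _)
        (mul_nonneg hBu0 hK₁0)
    have hB : |η * x₂ r| ≤ |η| * K₂ := by
      rw [abs_mul]; exact mul_le_mul_of_nonneg_left h4 (abs_nonneg _)
    calc |u₁ r * x₁ r * x₃ r - η * x₂ r| ≤ |u₁ r * x₁ r * x₃ r| + |η * x₂ r| := abs_sub _ _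
      _ ≤ Bu * K₁ * K₃ + |η| * K₂ := add_le_add hA hB
  · have h3 := bx3 r hr; have h4 := bx2 r hr; have h5 := hv r hr
    have hB : |η * x₂ r| ≤ |η| * K₂ := by
      rw [abs_mul]; exact mul_le_mul_of_nonneg_left h4 (abs_nonneg _)
    have hC2 : |u₂ r * x₃ r| ≤ Bv * K₃ := by
      rw [abs_mul]; exact mul_le_mul h5 h3 (abs_nonneg _) hBv0
    calc |η * x₂ r - u₂ r * x₃ r| ≤ |η * x₂ r| + |u₂ r * x₃ r| := abs_sub _ _
      _ ≤ |η| * K₂ + Bv * K₃ := add_le_add hB hC2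

/-! ### shifting and gluing identities -/

lemma shift_id {x g : ℝ → ℝ} (hx : ∀ t, 0 ≤ t → x t = x 0 + ∫ r in (0:ℝ)..t, g r)
    (hint : ∀ a b : ℝ, 0 ≤ a → a ≤ b → IntervalIntegrable g volume a b)
    {s : ℝ} (hs : 0 ≤ s) (t : ℝ) (htt : 0 ≤ t) :
    x (t + s) = x (0 + s) + ∫ r in (0:ℝ)..t, g (r + s) := by
  have h1 := hx (t + s) (by linarith)
  have h2 := hx s hs
  have hadd := intervalIntegral.integral_add_adjacent_intervals
    (hint 0 s le_rfl hs) (hint s (t + s) hs (by linarith))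
  have hcv : (∫ r in (0:ℝ)..t, g (r + s)) = ∫ r in (0+s)..(t+s), g r :=
    intervalIntegral.integral_comp_add_right g s
  rw [zero_add] at hcv
  rw [zero_add, hcv]
  linarith [h1, h2, hadd]

lemma lint_shift (F : ℝ → ℝ≥0∞) (s t : ℝ) :
    ∫⁻ q in Ioc (0:ℝ) t, F (q + s) = ∫⁻ q in Ioc s (s + t), F q := by
  have h := (measurePreserving_add_right volume s).setLIntegral_comp_emb
    (Homeomorph.addRight s).isClosedEmbedding.measurableEmbedding F (Ioc 0 t)
  rw [h]
  have : (fun x => x + s) '' Ioc (0:ℝ) t = Ioc (0+s) (t+s) := Set.image_add_const_Ioc _ _ _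
  rw [this, zero_add, add_comm t s]

lemma glue_id {x z g h : ℝ → ℝ} {s : ℝ} (hs : 0 ≤ s)
    (hxid : ∀ t, 0 ≤ t → x t = x 0 + ∫ r in (0:ℝ)..t, g r)
    (hzid : ∀ t, 0 ≤ t → z t = z 0 + ∫ r in (0:ℝ)..t, h r)
    (hz0 : z 0 = x s)
    (hgint : IntervalIntegrable g volume 0 s)
    (hhint : ∀ b : ℝ, 0 ≤ b → IntervalIntegrable h volume 0 b)
    (t : ℝ) (htt : 0 ≤ t) :
    (if t ≤ s then x t else z (max (t - s) 0)) =
      (if (0:ℝ) ≤ s then x 0 else z (max (0 - s) 0)) +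
        ∫ r in (0:ℝ)..t, (if r ≤ s then g r else h (r - s)) := by
  rw [if_pos hs]
  by_cases hts : t ≤ s
  · rw [if_pos hts]
    have : (∫ r in (0:ℝ)..t, (if r ≤ s then g r else h (r - s))) = ∫ r in (0:ℝ)..t, g r := by
      apply intervalIntegral.integral_congr
      intro r hr
      rw [uIcc_of_le htt] at hr
      exact if_pos (le_trans hr.2 hts)
    rw [this]; exact hxid t htt
  · push_neg at hts
    rw [if_neg (not_le.mpr hts)]
    have hts' : (0:ℝ) ≤ t - s := by linarith
    have hmax : max (t - s) 0 = t - s := max_eq_left hts'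
    have h2 : IntervalIntegrable (fun r => if r ≤ s then g r else h (r - s)) volume 0 s := by
      rw [intervalIntegrable_iff_integrableOn_Ioc_of_le hs] at hgint ⊢
      exact hgint.congr_fun (fun r hr => (if_pos hr.2).symm) measurableSet_Ioc
    have h3 : IntervalIntegrable (fun r => if r ≤ s then g r else h (r - s)) volume s t := by
      have := (hhint (t - s) hts').comp_sub_right s
      rw [zero_add, sub_add_cancel] at this
      rw [intervalIntegrable_iff_integrableOn_Ioc_of_le (le_of_lt hts)] at this ⊢
      exact this.congr_fun (fun r hr => (if_neg (not_le.mpr hr.1)).symm) measurableSet_Ioc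
    have hadd := intervalIntegral.integral_add_adjacent_intervals h2 h3
    have e1 : (∫ r in (0:ℝ)..s, (if r ≤ s then g r else h (r - s))) = ∫ r in (0:ℝ)..s, g r := by
      apply intervalIntegral.integral_congr
      intro r hr
      rw [uIcc_of_le hs] at hr
      exact if_pos hr.2
    have e2 : (∫ r in s..t, (if r ≤ s then g r else h (r - s))) = ∫ r in s..t, h (r - s) := by
      rw [intervalIntegral.integral_of_le (le_of_lt hts),
        intervalIntegral.integral_of_le (le_of_lt hts)]
      apply setIntegral_congr_fun measurableSet_Ioc
      intro r hr
      exact if_neg (not_le.mpr hr.1)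
    have e3 : (∫ r in s..t, h (r - s)) = ∫ r in (0:ℝ)..(t - s), h r := by
      have := intervalIntegral.integral_comp_sub_right h s (a := s) (b := t)
      rwa [sub_self] at this
    have h4 := hzid (t - s) hts'
    have h5 := hxid s hs
    rw [hmax]
    linarith [hadd, e1, e2, e3, h4, h5]

lemma glue_cont {x z : ℝ → ℝ} {s : ℝ} (hs : 0 ≤ s)
    (hx : ContinuousOn x (Ici 0)) (hz : ContinuousOn z (Ici 0)) (hz0 : z 0 = x s) :
    ContinuousOn (fun t => if t ≤ s then x t else z (max (t - s) 0)) (Ici 0) := by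
  have hfr : frontier {a : ℝ | a ≤ s} ⊆ {s} := by
    have : {a : ℝ | a ≤ s} = Iic s := rfl
    rw [this]
    exact frontier_Iic_subset s
  apply ContinuousOn.if
  · intro a ha
    have has : a = s := hfr ha.2
    subst has
    simp [hz0]
  · exact hx.mono inter_subset_left
  · have hcont : Continuous fun t : ℝ => max (t - s) 0 :=
      (continuous_id.sub continuous_const).max continuous_const
    have : ContinuousOn (fun t => z (max (t - s) 0)) (Ici 0) :=
      hz.comp hcont.continuousOn (fun t _ => show (0:ℝ) ≤ max (t - s) 0 from le_max_right _ _)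
    exact this.mono inter_subset_left

end SEIRAux


namespace SEIRAux

/-! ### value function basic lemmas -/

lemma vfin_le_cost {η βmin βnom γnom γmax Imax lam T : ℝ} {u₁ u₂ x₁ x₂ x₃ : ℝ → ℝ}
    (hc : IsCtrl βmin βnom γnom γmax u₁ u₂) (ht : IsTraj η u₁ u₂ x₁ x₂ x₃)
    (hX : ∀ t ∈ Icc (0:ℝ) T, InX Imax (x₁ t) (x₂ t) (x₃ t)) :
    Vfin η βmin βnom γnom γmax Imax lam T (x₁ 0) (x₂ 0) (x₃ 0) ≤
      ∫⁻ q in Ioc (0:ℝ) T,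
        ENNReal.ofReal (stageCost lam βnom γnom (x₂ q) (x₃ q) (u₁ q) (u₂ q)) :=
  sInf_le ⟨u₁, u₂, x₁, x₂, x₃, hc, ht, rfl, rfl, rfl, hX, rfl⟩

lemma vfin_le_vinf (η βmin βnom γnom γmax Imax lam T a b c : ℝ) :
    Vfin η βmin βnom γnom γmax Imax lam T a b c ≤ Vinf η βmin βnom γnom γmax Imax lam a b c := by
  apply le_sInf
  rintro J ⟨u₁, u₂, x₁, x₂, x₃, hc, ht, h1, h2, h3, hX, rfl⟩
  exact le_trans (sInf_le ⟨u₁, u₂, x₁, x₂, x₃, hc, ht, h1, h2, h3,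
      fun t ht' => hX t ht'.1, rfl⟩)
    (lintegral_mono_set Ioc_subset_Ioi_self)

lemma shift_feas {η βmin βnom γnom γmax : ℝ} {u₁ u₂ x₁ x₂ x₃ : ℝ → ℝ}
    (hc : IsCtrl βmin βnom γnom γmax u₁ u₂) (ht : IsTraj η u₁ u₂ x₁ x₂ x₃)
    {s : ℝ} (hs : 0 ≤ s) :
    IsCtrl βmin βnom γnom γmax (fun t => u₁ (t + s)) (fun t => u₂ (t + s)) ∧
    IsTraj η (fun t => u₁ (t + s)) (fun t => u₂ (t + s))
      (fun t => x₁ (t + s)) (fun t => x₂ (t + s)) (fun t => x₃ (t + s)) := by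
  have hmap : MapsTo (fun t : ℝ => t + s) (Ici 0) (Ici 0) := fun t ht' => by
    simp only [mem_Ici] at ht' ⊢; linarith
  have hconts : Continuous fun t : ℝ => t + s := continuous_id.add continuous_const
  refine ⟨⟨hc.1.comp (measurable_id.add_const s), hc.2.1.comp (measurable_id.add_const s),
      fun t ht' => hc.2.2 (t + s) (by linarith)⟩,
    ht.1.comp hconts.continuousOn hmap, ht.2.1.comp hconts.continuousOn hmap,
    ht.2.2.1.comp hconts.continuousOn hmap, ?_, ?_, ?_⟩
  · exact fun t htt => shift_id ht.2.2.2.1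
      (fun a b ha hab => (seir_II hc ht ha hab).1) hs t htt
  · exact fun t htt => shift_id ht.2.2.2.2.1
      (fun a b ha hab => (seir_II hc ht ha hab).2.1) hs t htt
  · exact fun t htt => shift_id ht.2.2.2.2.2
      (fun a b ha hab => (seir_II hc ht ha hab).2.2) hs t htt

lemma vfin_shift_le {η βmin βnom γnom γmax Imax lam : ℝ} {u₁ u₂ x₁ x₂ x₃ : ℝ → ℝ}
    (hc : IsCtrl βmin βnom γnom γmax u₁ u₂) (ht : IsTraj η u₁ u₂ x₁ x₂ x₃)
    {s t : ℝ} (hs : 0 ≤ s) (htt : 0 ≤ t)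
    (hX : ∀ q ∈ Icc (0:ℝ) (s + t), InX Imax (x₁ q) (x₂ q) (x₃ q)) :
    Vfin η βmin βnom γnom γmax Imax lam t (x₁ s) (x₂ s) (x₃ s) ≤
      ∫⁻ q in Ioc s (s + t),
        ENNReal.ofReal (stageCost lam βnom γnom (x₂ q) (x₃ q) (u₁ q) (u₂ q)) := by
  obtain ⟨hc', ht'⟩ := shift_feas hc ht hs
  have hX' : ∀ q ∈ Icc (0:ℝ) t, InX Imax (x₁ (q + s)) (x₂ (q + s)) (x₃ (q + s)) :=
    fun q hq => hX (q + s) ⟨by linarith [hq.1], by linarith [hq.2]⟩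
  have h := vfin_le_cost (lam := lam) (T := t) hc' ht' hX'
  simp only [zero_add] at h
  exact le_trans h (le_of_eq (lint_shift
    (fun q => ENNReal.ofReal (stageCost lam βnom γnom (x₂ q) (x₃ q) (u₁ q) (u₂ q))) s t))

/-! ### the gluing bound -/

lemma glue_bound {η βmin βnom γnom γmax Imax lam : ℝ} {u₁ u₂ x₁ x₂ x₃ : ℝ → ℝ}
    (hc : IsCtrl βmin βnom γnom γmax u₁ u₂) (ht : IsTraj η u₁ u₂ x₁ x₂ x₃)
    {s r : ℝ} (hs : 0 ≤ s) (hr : 0 ≤ r)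
    (hX : ∀ q ∈ Icc (0:ℝ) s, InX Imax (x₁ q) (x₂ q) (x₃ q)) :
    Vfin η βmin βnom γnom γmax Imax lam (s + r) (x₁ 0) (x₂ 0) (x₃ 0) ≤
      (∫⁻ q in Ioc (0:ℝ) s,
        ENNReal.ofReal (stageCost lam βnom γnom (x₂ q) (x₃ q) (u₁ q) (u₂ q)))
      + Vfin η βmin βnom γnom γmax Imax lam r (x₁ s) (x₂ s) (x₃ s) := by
  set A := ∫⁻ q in Ioc (0:ℝ) s,
    ENNReal.ofReal (stageCost lam βnom γnom (x₂ q) (x₃ q) (u₁ q) (u₂ q)) with hA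
  set S : Set ℝ≥0∞ := { J : ℝ≥0∞ | ∃ w₁ w₂ z₁ z₂ z₃ : ℝ → ℝ,
    IsCtrl βmin βnom γnom γmax w₁ w₂ ∧ IsTraj η w₁ w₂ z₁ z₂ z₃ ∧
      z₁ 0 = x₁ s ∧ z₂ 0 = x₂ s ∧ z₃ 0 = x₃ s ∧
      (∀ t ∈ Icc (0:ℝ) r, InX Imax (z₁ t) (z₂ t) (z₃ t)) ∧
      J = ∫⁻ q in Ioc (0:ℝ) r,
            ENNReal.ofReal (stageCost lam βnom γnom (z₂ q) (z₃ q) (w₁ q) (w₂ q)) } with hS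
  have hVS : Vfin η βmin βnom γnom γmax Imax lam r (x₁ s) (x₂ s) (x₃ s) = sInf S := rfl
  have key : ∀ J ∈ S,
      Vfin η βmin βnom γnom γmax Imax lam (s + r) (x₁ 0) (x₂ 0) (x₃ 0) ≤ A + J := by
    rintro J ⟨w₁, w₂, z₁, z₂, z₃, hcw, htz, hz1, hz2, hz3, hXz, rfl⟩
    apply sInf_le
    refine ⟨fun q => if q ≤ s then u₁ q else w₁ (q - s),
      fun q => if q ≤ s then u₂ q else w₂ (q - s),
      fun q => if q ≤ s then x₁ q else z₁ (max (q - s) 0),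
      fun q => if q ≤ s then x₂ q else z₂ (max (q - s) 0),
      fun q => if q ≤ s then x₃ q else z₃ (max (q - s) 0),
      ⟨?_, ?_, ?_⟩, ⟨?_, ?_, ?_, ?_, ?_, ?_⟩, by simp [hs], by simp [hs], by simp [hs],
      ?_, ?_⟩
    · exact Measurable.ite measurableSet_Iic hc.1 (hcw.1.comp (measurable_id.sub_const s))
    · exact Measurable.ite measurableSet_Iic hc.2.1 (hcw.2.1.comp (measurable_id.sub_const s))
    · intro t ht'
      by_cases hts : t ≤ s
      · simp only [if_pos hts]; exact hc.2.2 t ht'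
      · simp only [if_neg hts]
        exact hcw.2.2 (t - s) (by linarith [not_le.mp hts])
    · exact glue_cont hs ht.1 htz.1 hz1
    · exact glue_cont hs ht.2.1 htz.2.1 hz2
    · exact glue_cont hs ht.2.2.1 htz.2.2.1 hz3
    · -- identity for coordinate 1
      intro t htt
      have EQ : (fun q : ℝ => -((if q ≤ s then u₁ q else w₁ (q - s)) *
            (if q ≤ s then x₁ q else z₁ (max (q - s) 0)) *
            (if q ≤ s then x₃ q else z₃ (max (q - s) 0)))) =
          (fun q : ℝ => if q ≤ s then -(u₁ q * x₁ q * x₃ q) else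
            -(w₁ (q - s) * z₁ (q - s) * z₃ (q - s))) := by
        funext q
        by_cases hq : q ≤ s
        · simp only [if_pos hq]
        · simp only [if_neg hq, max_eq_left (by linarith [not_le.mp hq] : (0:ℝ) ≤ q - s)]
      show _ = _
      simp only [EQ]
      exact glue_id hs ht.2.2.2.1 htz.2.2.2.1 hz1
        (seir_II hc ht le_rfl hs).1 (fun b hb => (seir_II hcw htz le_rfl hb).1) t htt
    · intro t htt
      have EQ : (fun q : ℝ => ((if q ≤ s then u₁ q else w₁ (q - s)) *
            (if q ≤ s then x₁ q else z₁ (max (q - s) 0)) *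
            (if q ≤ s then x₃ q else z₃ (max (q - s) 0)) -
            η * (if q ≤ s then x₂ q else z₂ (max (q - s) 0)))) =
          (fun q : ℝ => if q ≤ s then (u₁ q * x₁ q * x₃ q - η * x₂ q) else
            (w₁ (q - s) * z₁ (q - s) * z₃ (q - s) - η * z₂ (q - s))) := by
        funext q
        by_cases hq : q ≤ s
        · simp only [if_pos hq]
        · simp only [if_neg hq, max_eq_left (by linarith [not_le.mp hq] : (0:ℝ) ≤ q - s)]
      show _ = _
      simp only [EQ]
      exact glue_id hs ht.2.2.2.2.1 htz.2.2.2.2.1 hz2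
        (seir_II hc ht le_rfl hs).2.1 (fun b hb => (seir_II hcw htz le_rfl hb).2.1) t htt
    · intro t htt
      have EQ : (fun q : ℝ => (η * (if q ≤ s then x₂ q else z₂ (max (q - s) 0)) -
            (if q ≤ s then u₂ q else w₂ (q - s)) *
            (if q ≤ s then x₃ q else z₃ (max (q - s) 0)))) =
          (fun q : ℝ => if q ≤ s then (η * x₂ q - u₂ q * x₃ q) else
            (η * z₂ (q - s) - w₂ (q - s) * z₃ (q - s))) := by
        funext q
        by_cases hq : q ≤ s
        · simp only [if_pos hq]
        · simp only [if_neg hq, max_eq_left (by linarith [not_le.mp hq] : (0:ℝ) ≤ q - s)]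
      show _ = _
      simp only [EQ]
      exact glue_id hs ht.2.2.2.2.2 htz.2.2.2.2.2 hz3
        (seir_II hc ht le_rfl hs).2.2 (fun b hb => (seir_II hcw htz le_rfl hb).2.2) t htt
    · -- state constraints
      intro t ht'
      by_cases hts : t ≤ s
      · simp only [if_pos hts]; exact hX t ⟨ht'.1, hts⟩
      · simp only [if_neg hts, max_eq_left (by linarith [not_le.mp hts] : (0:ℝ) ≤ t - s)]
        exact hXz (t - s) ⟨by linarith [not_le.mp hts], by linarith [ht'.2]⟩
    · -- cost identity
      have hsplit : Ioc (0:ℝ) (s + r) = Ioc 0 s ∪ Ioc s (s + r) :=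
        (Ioc_union_Ioc_eq_Ioc hs (by linarith)).symm
      rw [hsplit, lintegral_union measurableSet_Ioc (Set.Ioc_disjoint_Ioc_of_le le_rfl)]
      have hpart1 : (∫⁻ q in Ioc (0:ℝ) s, ENNReal.ofReal (stageCost lam βnom γnom
            ((if q ≤ s then x₂ q else z₂ (max (q - s) 0)))
            ((if q ≤ s then x₃ q else z₃ (max (q - s) 0)))
            ((if q ≤ s then u₁ q else w₁ (q - s)))
            ((if q ≤ s then u₂ q else w₂ (q - s))))) = A := by
        apply setLIntegral_congr_fun measurableSet_Ioc
        intro q hq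
        simp only [if_pos hq.2]
      have hpart2 : (∫⁻ q in Ioc s (s + r), ENNReal.ofReal (stageCost lam βnom γnom
            ((if q ≤ s then x₂ q else z₂ (max (q - s) 0)))
            ((if q ≤ s then x₃ q else z₃ (max (q - s) 0)))
            ((if q ≤ s then u₁ q else w₁ (q - s)))
            ((if q ≤ s then u₂ q else w₂ (q - s))))) =
          ∫⁻ q in Ioc (0:ℝ) r,
            ENNReal.ofReal (stageCost lam βnom γnom (z₂ q) (z₃ q) (w₁ q) (w₂ q)) := by
        have step1 : (∫⁻ q in Ioc s (s + r), ENNReal.ofReal (stageCost lam βnom γnom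
            ((if q ≤ s then x₂ q else z₂ (max (q - s) 0)))
            ((if q ≤ s then x₃ q else z₃ (max (q - s) 0)))
            ((if q ≤ s then u₁ q else w₁ (q - s)))
            ((if q ≤ s then u₂ q else w₂ (q - s))))) =
            ∫⁻ q in Ioc s (s + r), ENNReal.ofReal (stageCost lam βnom γnom
              (z₂ (q - s)) (z₃ (q - s)) (w₁ (q - s)) (w₂ (q - s))) := by
          apply setLIntegral_congr_fun measurableSet_Ioc
          intro q hq
          have h1 : ¬ q ≤ s := not_le.mpr hq.1
          simp only [if_neg h1, max_eq_left (by linarith [hq.1] : (0:ℝ) ≤ q - s)]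
        have step2 := lint_shift (fun q => ENNReal.ofReal (stageCost lam βnom γnom
          (z₂ (q - s)) (z₃ (q - s)) (w₁ (q - s)) (w₂ (q - s)))) s r
        simp only [add_sub_cancel_right] at step2
        rw [step1, ← step2]
      rw [hpart1, hpart2]
  calc Vfin η βmin βnom γnom γmax Imax lam (s + r) (x₁ 0) (x₂ 0) (x₃ 0) ≤
      ⨅ J ∈ S, (J + A) := le_iInf₂ fun J hJ => (key J hJ).trans (le_of_eq (add_comm A J))
    _ = sInf S + A := ENNReal.sInf_add.symm
    _ = _ := by rw [hVS, add_comm]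

lemma vfin_shift_glue {η βmin βnom γnom γmax Imax lam : ℝ} {u₁ u₂ x₁ x₂ x₃ : ℝ → ℝ}
    (hc : IsCtrl βmin βnom γnom γmax u₁ u₂) (ht : IsTraj η u₁ u₂ x₁ x₂ x₃)
    {s t r : ℝ} (hs : 0 ≤ s) (htt : 0 ≤ t) (hr : 0 ≤ r)
    (hX : ∀ q ∈ Icc (0:ℝ) (s + t), InX Imax (x₁ q) (x₂ q) (x₃ q)) :
    Vfin η βmin βnom γnom γmax Imax lam (t + r) (x₁ s) (x₂ s) (x₃ s) ≤
      (∫⁻ q in Ioc s (s + t),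
        ENNReal.ofReal (stageCost lam βnom γnom (x₂ q) (x₃ q) (u₁ q) (u₂ q)))
      + Vfin η βmin βnom γnom γmax Imax lam r (x₁ (s + t)) (x₂ (s + t)) (x₃ (s + t)) := by
  obtain ⟨hc', ht'⟩ := shift_feas hc ht hs
  have hX' : ∀ q ∈ Icc (0:ℝ) t, InX Imax (x₁ (q + s)) (x₂ (q + s)) (x₃ (q + s)) :=
    fun q hq => hX (q + s) ⟨by linarith [hq.1], by linarith [hq.2]⟩
  have h := glue_bound (lam := lam) (r := r) hc' ht' htt hr hX'
  simp only [zero_add] at h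
  rw [add_comm t s] at h
  exact le_trans h (add_le_add_left (le_of_eq (lint_shift
    (fun q => ENNReal.ofReal (stageCost lam βnom γnom (x₂ q) (x₃ q) (u₁ q) (u₂ q))) s t)) _)

/-! ### splitting the cost integral at multiples of δ -/

lemma lint_Ioc_split (F : ℝ → ℝ≥0∞) {δ : ℝ} (hδ : 0 ≤ δ) (j : ℕ) :
    ∀ m : ℕ, j ≤ m →
    ∫⁻ q in Ioc ((j:ℝ) * δ) ((m:ℝ) * δ), F q =
      ∑ k ∈ Finset.Ico j m, ∫⁻ q in Ioc ((k:ℝ) * δ) (((k:ℝ) + 1) * δ), F q := by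
  intro m
  induction m with
  | zero => intro hj
            have : j = 0 := Nat.le_zero.mp hj
            subst this
            simp
  | succ m ih =>
    intro hj
    rcases Nat.lt_or_ge j (m + 1) with hlt | hge
    · have hjm : j ≤ m := Nat.lt_succ_iff.mp hlt
      have hcast : ((m + 1 : ℕ) : ℝ) = (m:ℝ) + 1 := by push_cast; ring
      rw [hcast]
      have hsplit : Ioc ((j:ℝ) * δ) (((m:ℝ) + 1) * δ) =
          Ioc ((j:ℝ) * δ) ((m:ℝ) * δ) ∪ Ioc ((m:ℝ) * δ) (((m:ℝ) + 1) * δ) := by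
        refine (Ioc_union_Ioc_eq_Ioc ?_ ?_).symm
        · exact mul_le_mul_of_nonneg_right (by exact_mod_cast hjm) hδ
        · exact mul_le_mul_of_nonneg_right (by linarith) hδ
      rw [hsplit, lintegral_union measurableSet_Ioc (Set.Ioc_disjoint_Ioc_of_le le_rfl),
        ih hjm, Finset.sum_Ico_succ_top hjm]
    · have : j = m + 1 := le_antisymm hj hge
      subst this
      simp

end SEIRAux


set_option maxHeartbeats 1000000 in
/-- abstract MPC theorem — under local cost controllability (A2)
around an equilibrium `x^eq ∈ E` (with `M = inf ℓ* over X \ N(x^eq)` positive)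
and the bound (A3), for every control horizon `δ ∈ (0, κ)`, `κ = max{C'/M, ρ}`,
there are `N ≥ 1` and `α ∈ [0,1)` such that, with `T = Nδ`, the relaxed
Lyapunov inequality holds along optimal controls from every state in the
sublevel set `{V_T ≤ C'}`. -/
theorem relaxed_Lyapunov_from_A1_A2_A3
    (η βmin βnom γnom γmax Imax lam : ℝ)
    (hη : 0 < η) (hβm : 0 < βmin) (hβ : βmin < βnom)
    (hγn : 0 < γnom) (hγ : γnom < γmax) (hIm : 0 < Imax) (hIm1 : Imax ≤ 1)
    (hlam : lam ∈ Ioc (0:ℝ) 1)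
    -- the equilibrium x^eq ∈ E
    (xeq : ℝ × ℝ × ℝ) (hxeqX : InX Imax xeq.1 xeq.2.1 xeq.2.2)
    (hxeq2 : xeq.2.1 = 0) (hxeq3 : xeq.2.2 = 0)
    -- the neighbourhood N(x^eq)
    (Nbhd : Set (ℝ × ℝ × ℝ)) (hNbhd : Nbhd ∈ 𝓝 xeq)
    -- (A2): local cost controllability
    (ρ : ℝ) (hρ : 0 < ρ)
    (hA2 : ∀ p : ℝ × ℝ × ℝ, p ∈ Nbhd → InX Imax p.1 p.2.1 p.2.2 →
      Vinf η βmin βnom γnom γmax Imax lam p.1 p.2.1 p.2.2 ≤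
        ENNReal.ofReal (ρ * (lam * (p.2.1 ^ 2 + p.2.2 ^ 2))))
    -- M := inf {ℓ*(x) : x ∈ X \ N(x^eq)} > 0
    (M : ℝ)
    (hMdef : M = sInf ((fun p : ℝ × ℝ × ℝ => lam * (p.2.1 ^ 2 + p.2.2 ^ 2)) ''
      {p : ℝ × ℝ × ℝ | InX Imax p.1 p.2.1 p.2.2 ∧ p ∉ Nbhd}))
    (hMpos : 0 < M)
    (C' : ℝ) (hC' : 0 < C')
    -- (A3): δ ℓ*(x) ≤ C̄ V_δ(x) on the sublevel set {V_T ≤ C'}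
    (hA3 : ∀ T : ℝ, 0 < T → ∃ Cbar : ℝ, 0 < Cbar ∧
      ∀ δ : ℝ, δ ∈ Ioc (0:ℝ) T → ∀ p : ℝ × ℝ × ℝ,
        Vfin η βmin βnom γnom γmax Imax lam T p.1 p.2.1 p.2.2 ≤ ENNReal.ofReal C' →
        ENNReal.ofReal (δ * (lam * (p.2.1 ^ 2 + p.2.2 ^ 2))) ≤
          ENNReal.ofReal Cbar *
            Vfin η βmin βnom γnom γmax Imax lam δ p.1 p.2.1 p.2.2)
    -- the control horizon δ ∈ (0, κ), κ = max {C'/M, ρ}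
    (δ : ℝ) (hδ : 0 < δ) (hδκ : δ < max (C' / M) ρ) :
    ∃ N : ℕ, 1 ≤ N ∧ ∃ α : ℝ, α ∈ Ico (0:ℝ) 1 ∧
      ∀ a b c : ℝ,
        Vfin η βmin βnom γnom γmax Imax lam ((N : ℝ) * δ) a b c ≤ ENNReal.ofReal C' →
        ∀ u₁ u₂ x₁ x₂ x₃ : ℝ → ℝ,
          IsCtrl βmin βnom γnom γmax u₁ u₂ →
          IsTraj η u₁ u₂ x₁ x₂ x₃ →
          x₁ 0 = a → x₂ 0 = b → x₃ 0 = c →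
          (∀ t ∈ Icc (0:ℝ) ((N : ℝ) * δ), InX Imax (x₁ t) (x₂ t) (x₃ t)) →
          (∫⁻ s in Ioc (0:ℝ) ((N : ℝ) * δ),
              ENNReal.ofReal (stageCost lam βnom γnom (x₂ s) (x₃ s) (u₁ s) (u₂ s)))
            = Vfin η βmin βnom γnom γmax Imax lam ((N : ℝ) * δ) a b c →
          (Vfin η βmin βnom γnom γmax Imax lam ((N : ℝ) * δ) (x₁ δ) (x₂ δ) (x₃ δ) +
              ENNReal.ofReal (1 - α) *
                ∫⁻ s in Ioc (0:ℝ) δ,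
                  ENNReal.ofReal (stageCost lam βnom γnom (x₂ s) (x₃ s) (u₁ s) (u₂ s)))
            ≤ Vfin η βmin βnom γnom γmax Imax lam ((N : ℝ) * δ) a b c := by
  classical
  obtain ⟨κ, hκ⟩ : ∃ x : ℝ, x = max (C' / M) ρ := ⟨_, rfl⟩
  have hκρ : ρ ≤ κ := by rw [hκ]; exact le_max_right _ _
  have hκCM : C' / M ≤ κ := by rw [hκ]; exact le_max_left _ _
  obtain ⟨Cb, hCb0, hCbb⟩ := hA3 δ hδ
  have hKEY1 : ∀ p : ℝ × ℝ × ℝ,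
      Vfin η βmin βnom γnom γmax Imax lam δ p.1 p.2.1 p.2.2 ≤ ENNReal.ofReal C' →
      ENNReal.ofReal (δ * (lam * (p.2.1 ^ 2 + p.2.2 ^ 2))) ≤
        ENNReal.ofReal Cb * Vfin η βmin βnom γnom γmax Imax lam δ p.1 p.2.1 p.2.2 :=
    fun p hp => hCbb δ ⟨hδ, le_rfl⟩ p hp
  obtain ⟨γr, hγr⟩ : ∃ x : ℝ, x = max 1 (κ * Cb / δ) := ⟨_, rfl⟩
  have hγr1 : 1 ≤ γr := by rw [hγr]; exact le_max_left _ _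
  have hγrpos : 0 < γr := lt_of_lt_of_le one_pos hγr1
  have hγrk : κ * Cb / δ ≤ γr := by rw [hγr]; exact le_max_right _ _
  obtain ⟨q, hq⟩ : ∃ x : ℝ, x = 1 - 1 / γr := ⟨_, rfl⟩
  have hinv : 0 < 1 / γr := one_div_pos.mpr hγrpos
  have hinv1 : 1 / γr ≤ 1 := by rw [div_le_one hγrpos]; exact hγr1
  have hq0 : 0 ≤ q := by rw [hq]; linarith
  have hq1 : q < 1 := by rw [hq]; linarith
  have hγγ0 : 0 ≤ γr * (γr - 1) := mul_nonneg (by linarith) (by linarith)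
  obtain ⟨ε, hε⟩ : ∃ x : ℝ,
      x = min (δ * M / (Cb * (C' + 1))) (1 / (γr * (γr - 1) + 1)) := ⟨_, rfl⟩
  have hεle1 : ε ≤ δ * M / (Cb * (C' + 1)) := by rw [hε]; exact min_le_left _ _
  have hεle2 : ε ≤ 1 / (γr * (γr - 1) + 1) := by rw [hε]; exact min_le_right _ _
  have hεpos : 0 < ε := by
    rw [hε]
    exact lt_min (by positivity) (div_pos one_pos (by linarith))
  obtain ⟨n₀', hn₀'⟩ := exists_pow_lt_of_lt_one hεpos hq1
  set n₀ : ℕ := n₀' + 1 with hn₀def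
  have hqn : q ^ n₀ < ε :=
    lt_of_le_of_lt (pow_le_pow_of_le_one hq0 (le_of_lt hq1) (Nat.le_succ n₀')) hn₀'
  set Nn : ℕ := n₀ + 2 with hNndef
  have hNn2 : 2 ≤ Nn := by omega
  obtain ⟨α, hα⟩ : ∃ x : ℝ, x = γr * (γr - 1) * q ^ (n₀ + 1) := ⟨_, rfl⟩
  have hα0 : 0 ≤ α := by rw [hα]; exact mul_nonneg hγγ0 (pow_nonneg hq0 _)
  have hqsucc : q ^ (n₀ + 1) ≤ q ^ n₀ := pow_le_pow_of_le_one hq0 (le_of_lt hq1) (Nat.le_succ _)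
  have hα1 : α < 1 := by
    have h2 : q ^ n₀ ≤ 1 / (γr * (γr - 1) + 1) := le_of_lt (lt_of_lt_of_le hqn hεle2)
    have h3 : γr * (γr - 1) * q ^ (n₀ + 1) ≤ γr * (γr - 1) * (1 / (γr * (γr - 1) + 1)) :=
      mul_le_mul_of_nonneg_left (le_trans hqsucc h2) hγγ0
    have h4 : γr * (γr - 1) * (1 / (γr * (γr - 1) + 1)) < 1 := by
      rw [mul_one_div, div_lt_one (by linarith)]; linarith
    rw [hα]
    exact lt_of_le_of_lt h3 h4
  refine ⟨Nn, by omega, α, ⟨hα0, hα1⟩, ?_⟩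
  intro a b c hVC u₁ u₂ x₁ x₂ x₃ hc ht h10 h20 h30 hXf hopt
  have hδ0 : (0:ℝ) ≤ δ := hδ.le
  set F : ℝ → ℝ≥0∞ :=
    fun q' => ENNReal.ofReal (stageCost lam βnom γnom (x₂ q') (x₃ q') (u₁ q') (u₂ q')) with hF
  set Λ : ℕ → ℝ≥0∞ := fun k => ∫⁻ q' in Ioc ((k:ℝ) * δ) (((k:ℝ) + 1) * δ), F q' with hΛ
  have hsum : ∀ j m : ℕ, j ≤ m →
      (∫⁻ q' in Ioc ((j:ℝ) * δ) ((m:ℝ) * δ), F q') = ∑ k ∈ Finset.Ico j m, Λ k :=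
    fun j m h => SEIRAux.lint_Ioc_split F hδ0 j m h
  have htotal : Vfin η βmin βnom γnom γmax Imax lam ((Nn:ℝ) * δ) a b c =
      ∑ k ∈ Finset.Ico 0 Nn, Λ k := by
    rw [← hopt]
    have := hsum 0 Nn (Nat.zero_le _)
    simpa using this
  have hVne : Vfin η βmin βnom γnom γmax Imax lam ((Nn:ℝ) * δ) a b c ≠ ⊤ :=
    (lt_of_le_of_lt hVC ENNReal.ofReal_lt_top).ne
  have hΛleV : ∀ j : ℕ, j < Nn →
      Λ j ≤ Vfin η βmin βnom γnom γmax Imax lam ((Nn:ℝ) * δ) a b c := by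
    intro j hj
    rw [htotal]
    exact Finset.single_le_sum (f := Λ) (fun i _ => zero_le)
      (Finset.mem_Ico.mpr ⟨Nat.zero_le _, hj⟩)
  have hΛne : ∀ j : ℕ, j < Nn → Λ j ≠ ⊤ :=
    fun j hj => ne_top_of_le_ne_top hVne (hΛleV j hj)
  have hXsub : ∀ j : ℕ, j ≤ Nn → ∀ q' ∈ Icc (0:ℝ) ((j:ℝ) * δ),
      InX Imax (x₁ q') (x₂ q') (x₃ q') := by
    intro j hj q' hq'
    refine hXf q' ⟨hq'.1, le_trans hq'.2 ?_⟩
    exact mul_le_mul_of_nonneg_right (by exact_mod_cast hj) hδ0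
  have zInX : ∀ j : ℕ, j ≤ Nn →
      InX Imax (x₁ ((j:ℝ) * δ)) (x₂ ((j:ℝ) * δ)) (x₃ ((j:ℝ) * δ)) :=
    fun j hj => hXsub j hj _ ⟨mul_nonneg (Nat.cast_nonneg _) hδ0, le_refl _⟩
  have hVδ : ∀ j : ℕ, j < Nn →
      Vfin η βmin βnom γnom γmax Imax lam δ (x₁ ((j:ℝ) * δ)) (x₂ ((j:ℝ) * δ)) (x₃ ((j:ℝ) * δ))
        ≤ Λ j := by
    intro j hj
    have hXs : ∀ q' ∈ Icc (0:ℝ) ((j:ℝ) * δ + δ), InX Imax (x₁ q') (x₂ q') (x₃ q') := by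
      intro q' hq'
      refine hXsub (j + 1) (by omega) q' ⟨hq'.1, ?_⟩
      have hcast : ((j + 1 : ℕ) : ℝ) * δ = (j:ℝ) * δ + δ := by push_cast; ring
      rw [hcast]; exact hq'.2
    have h := SEIRAux.vfin_shift_le (lam := lam) (Imax := Imax) hc ht
      (s := (j:ℝ) * δ) (t := δ) (mul_nonneg (Nat.cast_nonneg _) hδ0) hδ0 hXs
    have hrw : (j:ℝ) * δ + δ = ((j:ℝ) + 1) * δ := by ring
    rw [hrw] at h
    exact h
  have hVδC : ∀ j : ℕ, j < Nn →
      Vfin η βmin βnom γnom γmax Imax lam δ (x₁ ((j:ℝ) * δ)) (x₂ ((j:ℝ) * δ)) (x₃ ((j:ℝ) * δ))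
        ≤ ENNReal.ofReal C' :=
    fun j hj => le_trans (hVδ j hj) (le_trans (hΛleV j hj) hVC)
  set efun : ℕ → ℝ := fun j => lam * ((x₂ ((j:ℝ) * δ)) ^ 2 + (x₃ ((j:ℝ) * δ)) ^ 2) with hefun
  have hef0 : ∀ j, 0 ≤ efun j := fun j => mul_nonneg hlam.1.le (by positivity)
  have hKEY1' : ∀ j : ℕ, j < Nn →
      ENNReal.ofReal (δ * efun j) ≤ ENNReal.ofReal Cb *
        Vfin η βmin βnom γnom γmax Imax lam δ
          (x₁ ((j:ℝ) * δ)) (x₂ ((j:ℝ) * δ)) (x₃ ((j:ℝ) * δ)) := by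
    intro j hj
    exact hKEY1 (⟨x₁ ((j:ℝ) * δ), x₂ ((j:ℝ) * δ), x₃ ((j:ℝ) * δ)⟩) (hVδC j hj)
  have hconv : ∀ (co : ℝ), 0 ≤ co → co * Cb / δ ≤ γr → ∀ j : ℕ, j < Nn →
      ENNReal.ofReal (co * efun j) ≤ ENNReal.ofReal γr * Λ j := by
    intro co hco hcoγ j hj
    have hre : co / δ * (δ * efun j) = co * efun j := by
      field_simp [hδ.ne']
    have h1 : ENNReal.ofReal (co * efun j) =
        ENNReal.ofReal (co / δ) * ENNReal.ofReal (δ * efun j) := by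
      rw [← ENNReal.ofReal_mul (div_nonneg hco hδ0), hre]
    rw [h1]
    calc ENNReal.ofReal (co / δ) * ENNReal.ofReal (δ * efun j)
        ≤ ENNReal.ofReal (co / δ) * (ENNReal.ofReal Cb *
            Vfin η βmin βnom γnom γmax Imax lam δ
              (x₁ ((j:ℝ) * δ)) (x₂ ((j:ℝ) * δ)) (x₃ ((j:ℝ) * δ))) :=
          mul_le_mul_right (hKEY1' j hj) _
      _ = ENNReal.ofReal (co / δ * Cb) *
            Vfin η βmin βnom γnom γmax Imax lam δ
              (x₁ ((j:ℝ) * δ)) (x₂ ((j:ℝ) * δ)) (x₃ ((j:ℝ) * δ)) := by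
          rw [← mul_assoc, ← ENNReal.ofReal_mul (div_nonneg hco hδ0)]
      _ ≤ ENNReal.ofReal γr * Λ j := by
          apply mul_le_mul'
          · apply ENNReal.ofReal_le_ofReal
            calc co / δ * Cb = co * Cb / δ := by ring
              _ ≤ γr := hcoγ
          · exact hVδ j hj
  have hMle : ∀ j : ℕ, j ≤ Nn →
      (⟨x₁ ((j:ℝ) * δ), x₂ ((j:ℝ) * δ), x₃ ((j:ℝ) * δ)⟩ : ℝ × ℝ × ℝ) ∉ Nbhd →
      M ≤ efun j := by
    intro j hj hnb
    rw [hMdef]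
    apply csInf_le
    · refine ⟨0, ?_⟩
      rintro y ⟨p, hp, rfl⟩
      exact mul_nonneg hlam.1.le (by positivity)
    · exact ⟨_, ⟨zInX j hj, hnb⟩, rfl⟩
  have hργ : ρ * Cb / δ ≤ γr := by
    refine le_trans ?_ hγrk
    gcongr
  have hCMγ : (C' / M) * Cb / δ ≤ γr := by
    refine le_trans ?_ hγrk
    gcongr
  have htail : ∀ j : ℕ, j < Nn →
      (∑ k ∈ Finset.Ico j Nn, Λ k) ≤ ENNReal.ofReal γr * Λ j := by
    intro j hj
    have hjNr : (0:ℝ) ≤ (Nn:ℝ) - (j:ℝ) := by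
      have : (j:ℝ) ≤ (Nn:ℝ) := by exact_mod_cast hj.le
      linarith
    have hglue : Vfin η βmin βnom γnom γmax Imax lam ((Nn:ℝ) * δ) a b c ≤
        (∑ k ∈ Finset.Ico 0 j, Λ k) +
          Vfin η βmin βnom γnom γmax Imax lam (((Nn:ℝ) - (j:ℝ)) * δ)
            (x₁ ((j:ℝ) * δ)) (x₂ ((j:ℝ) * δ)) (x₃ ((j:ℝ) * δ)) := by
      have h := SEIRAux.vfin_shift_glue (lam := lam) hc ht (s := 0) (t := (j:ℝ) * δ)
        (r := ((Nn:ℝ) - (j:ℝ)) * δ) le_rfl (mul_nonneg (Nat.cast_nonneg _) hδ0)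
        (mul_nonneg hjNr hδ0) (by simpa using hXsub j hj.le)
      simp only [zero_add] at h
      rw [h10, h20, h30] at h
      have e1 : (j:ℝ) * δ + ((Nn:ℝ) - (j:ℝ)) * δ = (Nn:ℝ) * δ := by ring
      rw [e1] at h
      have e2 : (∫⁻ q' in Ioc (0:ℝ) ((j:ℝ) * δ), F q') = ∑ k ∈ Finset.Ico 0 j, Λ k := by
        have := hsum 0 j (Nat.zero_le _)
        simpa using this
      rw [e2] at h
      exact h
    have hsplitV : Vfin η βmin βnom γnom γmax Imax lam ((Nn:ℝ) * δ) a b c =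
        (∑ k ∈ Finset.Ico 0 j, Λ k) + ∑ k ∈ Finset.Ico j Nn, Λ k := by
      rw [htotal, ← Finset.sum_Ico_consecutive Λ (Nat.zero_le j) hj.le]
    have hheadne : (∑ k ∈ Finset.Ico 0 j, Λ k) ≠ ⊤ := by
      intro hcon
      apply hVne
      rw [hsplitV, hcon, top_add]
    have htail_le : (∑ k ∈ Finset.Ico j Nn, Λ k) ≤
        Vfin η βmin βnom γnom γmax Imax lam (((Nn:ℝ) - (j:ℝ)) * δ)
          (x₁ ((j:ℝ) * δ)) (x₂ ((j:ℝ) * δ)) (x₃ ((j:ℝ) * δ)) := by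
      rw [hsplitV] at hglue
      exact (ENNReal.add_le_add_iff_left hheadne).mp hglue
    by_cases hem : (⟨x₁ ((j:ℝ) * δ), x₂ ((j:ℝ) * δ), x₃ ((j:ℝ) * δ)⟩ : ℝ × ℝ × ℝ) ∈ Nbhd
    · have hA2' := hA2 _ hem (zInX j hj.le)
      calc (∑ k ∈ Finset.Ico j Nn, Λ k) ≤ _ := htail_le
        _ ≤ Vinf η βmin βnom γnom γmax Imax lam
              (x₁ ((j:ℝ) * δ)) (x₂ ((j:ℝ) * δ)) (x₃ ((j:ℝ) * δ)) :=
            SEIRAux.vfin_le_vinf _ _ _ _ _ _ _ _ _ _ _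
        _ ≤ ENNReal.ofReal (ρ * efun j) := hA2'
        _ ≤ ENNReal.ofReal γr * Λ j := hconv ρ hρ.le hργ j hj
    · have hMj : M ≤ efun j := hMle j hj.le hem
      have hC'e : C' ≤ (C' / M) * efun j := by
        rw [div_mul_eq_mul_div, le_div_iff₀ hMpos]
        exact mul_le_mul_of_nonneg_left hMj hC'.le
      calc (∑ k ∈ Finset.Ico j Nn, Λ k)
          ≤ Vfin η βmin βnom γnom γmax Imax lam ((Nn:ℝ) * δ) a b c := by
            rw [hsplitV]; exact le_add_self
        _ ≤ ENNReal.ofReal C' := hVC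
        _ ≤ ENNReal.ofReal ((C' / M) * efun j) := ENNReal.ofReal_le_ofReal hC'e
        _ ≤ ENNReal.ofReal γr * Λ j := hconv (C' / M) (by positivity) hCMγ j hj
  set l : ℕ → ℝ := fun k => (Λ k).toReal with hldef
  have hlj : ∀ k, l k = (Λ k).toReal := fun k => rfl
  have hl0 : ∀ k, 0 ≤ l k := fun k => ENNReal.toReal_nonneg
  set Sr : ℕ → ℝ := fun j => ∑ k ∈ Finset.Ico j Nn, l k with hSrdef
  have hSrj : ∀ j, Sr j = ∑ k ∈ Finset.Ico j Nn, l k := fun j => rfl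
  have hSr0 : ∀ j, 0 ≤ Sr j := fun j => Finset.sum_nonneg (fun k _ => hl0 k)
  have hSrtoReal : ∀ j : ℕ, Sr j = (∑ k ∈ Finset.Ico j Nn, Λ k).toReal := by
    intro j
    rw [hSrj]
    exact (ENNReal.toReal_sum (fun k hk => hΛne k (Finset.mem_Ico.mp hk).2)).symm
  have hSrle : ∀ j : ℕ, j < Nn → Sr j ≤ γr * l j := by
    intro j hj
    have h := ENNReal.toReal_mono
      (ENNReal.mul_ne_top ENNReal.ofReal_ne_top (hΛne j hj)) (htail j hj)
    rw [ENNReal.toReal_mul, ENNReal.toReal_ofReal (by linarith : (0:ℝ) ≤ γr)] at h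
    rw [hSrtoReal j]
    exact h
  have hdecay : ∀ j : ℕ, j < Nn → Sr (j + 1) ≤ q * Sr j := by
    intro j hj
    have hsplitS : Sr j = l j + Sr (j + 1) := Finset.sum_eq_sum_Ico_succ_bot hj l
    have hlj' : Sr j / γr ≤ l j := by
      rw [div_le_iff₀ hγrpos]
      calc Sr j ≤ γr * l j := hSrle j hj
        _ = l j * γr := by ring
    have hqe : q * Sr j = Sr j - Sr j / γr := by rw [hq]; ring
    linarith
  have hpow : ∀ j : ℕ, j ≤ Nn → Sr j ≤ q ^ j * Sr 0 := by
    intro j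
    induction j with
    | zero => intro _; simp
    | succ j ih =>
      intro hj
      have hj' : j < Nn := by omega
      calc Sr (j + 1) ≤ q * Sr j := hdecay j hj'
        _ ≤ q * (q ^ j * Sr 0) := mul_le_mul_of_nonneg_left (ih (by omega)) hq0
        _ = q ^ (j + 1) * Sr 0 := by ring
  have hS0 : Sr 0 = (Vfin η βmin βnom γnom γmax Imax lam ((Nn:ℝ) * δ) a b c).toReal := by
    rw [hSrtoReal 0, htotal]
  have hS0C : Sr 0 ≤ C' := by
    rw [hS0]
    exact ENNReal.toReal_le_of_le_ofReal hC'.le hVC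
  have hS0γ : Sr 0 ≤ γr * l 0 := hSrle 0 (by omega)
  have hNm1lt : Nn - 1 < Nn := by omega
  have hNm1 : (Nn - 1) + 1 = Nn := by omega
  have hlast_eq : Sr (Nn - 1) = l (Nn - 1) := by
    have hico : Finset.Ico (Nn - 1) Nn = {Nn - 1} := by
      have h6 := Nat.Ico_succ_singleton (Nn - 1)
      rwa [hNm1] at h6
    rw [hSrj, hico, Finset.sum_singleton]
  have hlast : l (Nn - 1) ≤ q ^ (n₀ + 1) * Sr 0 := by
    have h1 : Sr (Nn - 1) ≤ q ^ (Nn - 1) * Sr 0 := hpow (Nn - 1) (by omega)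
    have h2 : Nn - 1 = n₀ + 1 := by omega
    rw [hlast_eq, h2] at h1
    exact h1
  have hinN : (⟨x₁ (((Nn - 1 : ℕ):ℝ) * δ), x₂ (((Nn - 1 : ℕ):ℝ) * δ),
      x₃ (((Nn - 1 : ℕ):ℝ) * δ)⟩ : ℝ × ℝ × ℝ) ∈ Nbhd := by
    by_contra hnb
    have hMj : M ≤ efun (Nn - 1) := hMle (Nn - 1) (by omega) hnb
    have hK := hKEY1' (Nn - 1) hNm1lt
    have hK2 : ENNReal.ofReal (δ * efun (Nn - 1)) ≤ ENNReal.ofReal Cb * Λ (Nn - 1) :=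
      le_trans hK (mul_le_mul_right (hVδ (Nn - 1) hNm1lt) _)
    have hK3 : δ * efun (Nn - 1) ≤ Cb * l (Nn - 1) := by
      have := ENNReal.toReal_mono
        (ENNReal.mul_ne_top ENNReal.ofReal_ne_top (hΛne (Nn - 1) hNm1lt)) hK2
      rwa [ENNReal.toReal_ofReal (mul_nonneg hδ0 (hef0 _)), ENNReal.toReal_mul,
        ENNReal.toReal_ofReal hCb0.le] at this
    have hε1 : q ^ n₀ < δ * M / (Cb * (C' + 1)) := lt_of_lt_of_le hqn hεle1
    have hup : l (Nn - 1) ≤ q ^ n₀ * C' := by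
      calc l (Nn - 1) ≤ q ^ (n₀ + 1) * Sr 0 := hlast
        _ ≤ q ^ n₀ * C' := mul_le_mul hqsucc hS0C (hSr0 0) (pow_nonneg hq0 _)
    have hA : q ^ n₀ * (Cb * (C' + 1)) < δ * M := by
      rw [lt_div_iff₀ (mul_pos hCb0 (by linarith))] at hε1
      linarith [hε1]
    have hB : Cb * l (Nn - 1) ≤ Cb * (q ^ n₀ * C') := mul_le_mul_of_nonneg_left hup hCb0.le
    have hC : δ * M ≤ Cb * l (Nn - 1) :=
      le_trans (mul_le_mul_of_nonneg_left hMj hδ0) hK3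
    have hD : Cb * (q ^ n₀ * C') + q ^ n₀ * Cb = q ^ n₀ * (Cb * (C' + 1)) := by ring
    have hE : 0 ≤ q ^ n₀ * Cb := mul_nonneg (pow_nonneg hq0 n₀) hCb0.le
    linarith [hA, hB, hC, hD, hE]
  have hterm : Vfin η βmin βnom γnom γmax Imax lam (2 * δ)
      (x₁ (((Nn - 1 : ℕ):ℝ) * δ)) (x₂ (((Nn - 1 : ℕ):ℝ) * δ)) (x₃ (((Nn - 1 : ℕ):ℝ) * δ))
      ≤ ENNReal.ofReal γr * Λ (Nn - 1) := by
    refine le_trans (SEIRAux.vfin_le_vinf _ _ _ _ _ _ _ _ _ _ _)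
      (le_trans (hA2 _ hinN (zInX (Nn - 1) (by omega))) ?_)
    exact hconv ρ hρ.le hργ (Nn - 1) hNm1lt
  have hcastN : ((Nn - 1 : ℕ) : ℝ) = (Nn:ℝ) - 1 := by
    rw [Nat.cast_sub (by omega : 1 ≤ Nn), Nat.cast_one]
  have hmain : Vfin η βmin βnom γnom γmax Imax lam ((Nn:ℝ) * δ) (x₁ δ) (x₂ δ) (x₃ δ) ≤
      (∑ k ∈ Finset.Ico 1 (Nn - 1), Λ k) +
        Vfin η βmin βnom γnom γmax Imax lam (2 * δ)
          (x₁ (((Nn - 1 : ℕ):ℝ) * δ)) (x₂ (((Nn - 1 : ℕ):ℝ) * δ))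
          (x₃ (((Nn - 1 : ℕ):ℝ) * δ)) := by
    have hN2r : (2:ℝ) ≤ (Nn:ℝ) := by exact_mod_cast hNn2
    have ht2 : (0:ℝ) ≤ ((Nn:ℝ) - 2) * δ := mul_nonneg (by linarith) hδ0
    have hXs : ∀ q' ∈ Icc (0:ℝ) (δ + ((Nn:ℝ) - 2) * δ),
        InX Imax (x₁ q') (x₂ q') (x₃ q') := by
      intro q' hq'
      refine hXf q' ⟨hq'.1, le_trans hq'.2 ?_⟩
      linarith only [hδ0]
    have h := SEIRAux.vfin_shift_glue (lam := lam) hc ht (s := δ) (t := ((Nn:ℝ) - 2) * δ)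
      (r := 2 * δ) hδ0 ht2 (by linarith) hXs
    have e1 : ((Nn:ℝ) - 2) * δ + 2 * δ = (Nn:ℝ) * δ := by ring
    have e2 : δ + ((Nn:ℝ) - 2) * δ = ((Nn - 1 : ℕ):ℝ) * δ := by rw [hcastN]; ring
    rw [e1, e2] at h
    have e3 : (∫⁻ q' in Ioc δ (((Nn - 1 : ℕ):ℝ) * δ), F q') =
        ∑ k ∈ Finset.Ico 1 (Nn - 1), Λ k := by
      have h4 := hsum 1 (Nn - 1) (by omega)
      simpa using h4
    rw [e3] at h
    exact h
  have hΛ0 : (∫⁻ s in Ioc (0:ℝ) δ,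
      ENNReal.ofReal (stageCost lam βnom γnom (x₂ s) (x₃ s) (u₁ s) (u₂ s))) = Λ 0 := by
    rw [hΛ]
    norm_num
    rfl
  rw [hΛ0]
  have hmidne : (∑ k ∈ Finset.Ico 1 (Nn - 1), Λ k) ≠ ⊤ := by
    intro hcon
    apply hVne
    rw [htotal]
    have hsub : Finset.Ico 1 (Nn - 1) ⊆ Finset.Ico 0 Nn := by
      intro k hk
      simp only [Finset.mem_Ico] at hk ⊢
      omega
    have h5 := Finset.sum_le_sum_of_subset (f := Λ) hsub
    rw [hcon] at h5
    exact top_le_iff.mp h5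
  have htermne : ENNReal.ofReal γr * Λ (Nn - 1) ≠ ⊤ :=
    ENNReal.mul_ne_top ENNReal.ofReal_ne_top (hΛne (Nn - 1) hNm1lt)
  have hLne : Vfin η βmin βnom γnom γmax Imax lam ((Nn:ℝ) * δ) (x₁ δ) (x₂ δ) (x₃ δ) ≠ ⊤ :=
    ne_top_of_le_ne_top (ENNReal.add_ne_top.mpr ⟨hmidne, htermne⟩)
      (le_trans hmain (add_le_add_right hterm _))
  have hΛ0ne : Λ 0 ≠ ⊤ := hΛne 0 (by omega)
  rw [← ENNReal.toReal_le_toReal (ENNReal.add_ne_top.mpr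
    ⟨hLne, ENNReal.mul_ne_top ENNReal.ofReal_ne_top hΛ0ne⟩) hVne]
  rw [ENNReal.toReal_add hLne (ENNReal.mul_ne_top ENNReal.ofReal_ne_top hΛ0ne),
    ENNReal.toReal_mul, ENNReal.toReal_ofReal (by linarith : (0:ℝ) ≤ 1 - α)]
  have hyb : (Vfin η βmin βnom γnom γmax Imax lam ((Nn:ℝ) * δ) (x₁ δ) (x₂ δ) (x₃ δ)).toReal ≤
      (∑ k ∈ Finset.Ico 1 (Nn - 1), l k) + γr * l (Nn - 1) := by
    have h := ENNReal.toReal_mono (ENNReal.add_ne_top.mpr ⟨hmidne, htermne⟩)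
      (le_trans hmain (add_le_add_right hterm _))
    rw [ENNReal.toReal_add hmidne htermne, ENNReal.toReal_mul,
      ENNReal.toReal_ofReal (by linarith : (0:ℝ) ≤ γr)] at h
    have hsum_eq : (∑ k ∈ Finset.Ico 1 (Nn - 1), Λ k).toReal =
        ∑ k ∈ Finset.Ico 1 (Nn - 1), l k :=
      ENNReal.toReal_sum (fun k hk => hΛne k (by
        have := (Finset.mem_Ico.mp hk).2; omega))
    rw [hsum_eq] at h
    exact h
  have hVeq : (Vfin η βmin βnom γnom γmax Imax lam ((Nn:ℝ) * δ) a b c).toReal =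
      l 0 + ((∑ k ∈ Finset.Ico 1 (Nn - 1), l k) + l (Nn - 1)) := by
    rw [← hS0]
    have h1 : Sr 0 = l 0 + ∑ k ∈ Finset.Ico 1 Nn, l k :=
      Finset.sum_eq_sum_Ico_succ_bot (by omega) l
    have h2 : ∑ k ∈ Finset.Ico 1 Nn, l k =
        (∑ k ∈ Finset.Ico 1 (Nn - 1), l k) + l (Nn - 1) := by
      rw [← hNm1]
      exact Finset.sum_Ico_succ_top (by omega) l
    rw [h1, h2]
  rw [hVeq]
  have hkey : (γr - 1) * l (Nn - 1) ≤ α * l 0 := by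
    have h1 : l (Nn - 1) ≤ q ^ (n₀ + 1) * (γr * l 0) := by
      calc l (Nn - 1) ≤ q ^ (n₀ + 1) * Sr 0 := hlast
        _ ≤ q ^ (n₀ + 1) * (γr * l 0) :=
          mul_le_mul_of_nonneg_left hS0γ (pow_nonneg hq0 _)
    have h2 : (γr - 1) * l (Nn - 1) ≤ (γr - 1) * (q ^ (n₀ + 1) * (γr * l 0)) :=
      mul_le_mul_of_nonneg_left h1 (by linarith)
    have h3 : (γr - 1) * (q ^ (n₀ + 1) * (γr * l 0)) = α * l 0 := by
      rw [hα]; ring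
    linarith
  have hlN0 : 0 ≤ l (Nn - 1) := hl0 _
  have hl00 : 0 ≤ l 0 := hl0 _
  linarith only [hyb, hkey]
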